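/- (Orthogonal-slices exponential convergence; Remark following Theorem 4.3 of the paper, generalized form.) In the matrix FSD setup, suppose the slices are mutually orthogonal, i.e., M_iᵀ · M_j = 0 for all i ≠ j, and suppose κ = max_{0≤i≤n−1} ‖I_K − α·M_iᵀM_i‖₂ < 1. Then the error decays geometrically: E(t) ≤ κ^t · E(0) for every integer t ≥ 0. -/
import Mathlib


open Matrix Finset Filter

noncomputable def frobNorm {m k : ℕ} (A : Matrix (Fin m) (Fin k) ℝ) : ℝ :=
  Real.sqrt (∑ i, ∑ j, (A i j) ^ 2)

noncomputable def specNorm {m k : ℕ} (A : Matrix (Fin m) (Fin k) ℝ) : ℝ :=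
  ‖LinearMap.toContinuousLinearMap (Matrix.toEuclideanLin A)‖

def idx (n : ℕ) (hn : 0 < n) (a : ℤ) : Fin n :=
  ⟨(a % (n : ℤ)).toNat, by
    have h1 : (0 : ℤ) < (n : ℤ) := by exact_mod_cast hn
    have h2 := Int.emod_nonneg a h1.ne'
    have h3 := Int.emod_lt_of_pos a h1
    omega⟩

noncomputable def kappaFSD {n N K : ℕ} (hn : 0 < n) (α : ℝ)
    (M : Fin n → Matrix (Fin N) (Fin K) ℝ) : ℝ :=
  Finset.univ.sup' (Finset.univ_nonempty_iff.mpr ⟨⟨0, hn⟩⟩)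
    fun i => specNorm ((1 : Matrix (Fin K) (Fin K) ℝ) - α • ((M i)ᵀ * M i))

noncomputable def muFSD {n N K : ℕ} (hn : 2 ≤ n)
    (M : Fin n → Matrix (Fin N) (Fin K) ℝ) : ℝ :=
  ((Finset.univ : Finset (Fin n × Fin n)).filter fun p => p.1 ≠ p.2).sup'
    ⟨(⟨0, by omega⟩, ⟨1, by omega⟩), by
      refine Finset.mem_filter.mpr ⟨Finset.mem_univ _, ?_⟩
      simp [Fin.ext_iff]⟩
    fun p => specNorm ((M p.1)ᵀ * M p.2)

lemma specNorm_nonneg {m k : ℕ} (A : Matrix (Fin m) (Fin k) ℝ) : 0 ≤ specNorm A :=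
  norm_nonneg _

lemma frobNorm_mul_le {k m p : ℕ} (C : Matrix (Fin k) (Fin m) ℝ)
    (E : Matrix (Fin m) (Fin p) ℝ) :
    frobNorm (C * E) ≤ specNorm C * frobNorm E := by
  set L := LinearMap.toContinuousLinearMap (Matrix.toEuclideanLin C) with hL
  have key : ∀ j : Fin p, ∑ i, ((C * E) i j) ^ 2 ≤ specNorm C ^ 2 * ∑ i, (E i j) ^ 2 := by
    intro j
    set v : EuclideanSpace ℝ (Fin m) := (WithLp.equiv 2 (Fin m → ℝ)).symm (fun i => E i j) with hv
    have h1 : ‖L v‖ ≤ ‖L‖ * ‖v‖ := L.le_opNorm v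
    have hLv : L v = (WithLp.equiv 2 (Fin k → ℝ)).symm (C *ᵥ fun i => E i j) := by
      simp [hL, hv, LinearMap.toContinuousLinearMap]
    have hnLv : ‖L v‖ ^ 2 = ∑ i, ((C * E) i j) ^ 2 := by
      rw [hLv]
      rw [EuclideanSpace.norm_eq, Real.sq_sqrt (by positivity)]
      congr 1; ext i
      simp [Matrix.mulVec, Matrix.mul_apply, dotProduct, sq_abs]
    have hnv : ‖v‖ ^ 2 = ∑ i, (E i j) ^ 2 := by
      rw [hv, EuclideanSpace.norm_eq, Real.sq_sqrt (by positivity)]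
      simp [sq_abs]
    calc ∑ i, ((C * E) i j) ^ 2 = ‖L v‖ ^ 2 := hnLv.symm
      _ ≤ (‖L‖ * ‖v‖) ^ 2 := pow_le_pow_left₀ (norm_nonneg _) h1 2
      _ = specNorm C ^ 2 * ∑ i, (E i j) ^ 2 := by
          rw [mul_pow, hnv]; rfl
  unfold frobNorm
  rw [Finset.sum_comm, Finset.sum_comm (γ := Fin m)]
  calc Real.sqrt (∑ j, ∑ i, ((C * E) i j) ^ 2)
      ≤ Real.sqrt (∑ j, specNorm C ^ 2 * ∑ i, (E i j) ^ 2) := by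
        apply Real.sqrt_le_sqrt; exact Finset.sum_le_sum fun j _ => key j
    _ = specNorm C * Real.sqrt (∑ j, ∑ i, (E i j) ^ 2) := by
        rw [← Finset.mul_sum, Real.sqrt_mul (by positivity), Real.sqrt_sq (specNorm_nonneg C)]

lemma idx_ne {n : ℕ} (hn : 0 < n) (t : ℤ) (i : Fin n) (hi : i ≠ ⟨0, hn⟩) :
    idx n hn (t - (i : ℕ)) ≠ idx n hn t := by
  intro h
  have h1 : (0 : ℤ) < (n : ℤ) := by exact_mod_cast hn
  have h2 := Int.emod_nonneg (t - (i:ℕ)) h1.ne'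
  have h3 := Int.emod_nonneg t h1.ne'
  have heq : (t - (i:ℕ)) % n = t % n := by
    have := congrArg (fun x : Fin n => (x.1 : ℤ)) h
    simpa [idx, Int.toNat_of_nonneg h2, Int.toNat_of_nonneg h3] using this
  have h4 : ((t - (i:ℕ)) - t) % n = 0 :=
    (Int.emod_eq_emod_iff_emod_sub_eq_zero).mp heq
  have h5 : (n:ℤ) ∣ ((i:ℕ):ℤ) := by
    have he : (t - (i:ℕ)) - t = -((i:ℕ):ℤ) := by ring
    rw [he] at h4
    exact dvd_neg.mp (Int.dvd_of_emod_eq_zero h4)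
  have h6 : n ∣ (i:ℕ) := by exact_mod_cast h5
  have h7 : (i:ℕ) = 0 := Nat.eq_zero_of_dvd_of_lt h6 i.isLt
  exact hi (Fin.ext h7)

theorem fsd_orthogonal_slices_geometric_decay
    {n N K P : ℕ} (hn : 2 ≤ n) (hN : 1 ≤ N) (hK : 1 ≤ K) (hP : 1 ≤ P)
    (M : Fin n → Matrix (Fin N) (Fin K) ℝ)
    (Xstar : Matrix (Fin K) (Fin P) ℝ)
    (B : Matrix (Fin N) (Fin P) ℝ) (hB : B = (∑ i, M i) * Xstar)
    (α : ℝ) (hα : 0 < α)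
    (X : ℤ → Matrix (Fin K) (Fin P) ℝ) (R : ℤ → Matrix (Fin N) (Fin P) ℝ)
    (hX0 : ∀ t : ℤ, t ≤ 0 → X t = 0)
    (hR : ∀ t : ℤ, 0 ≤ t →
      R (t + 1) = B - ∑ i : Fin n, M (idx n (by omega) (t - ((i : ℕ) : ℤ))) * X (t - ((i : ℕ) : ℤ)))
    (hXstep : ∀ t : ℤ, 0 ≤ t →
      X (t + 1) = X t + α • ((M (idx n (by omega) t))ᵀ * R (t + 1)))
    (horth : ∀ i j : Fin n, i ≠ j → (M i)ᵀ * M j = 0)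
    (hκ : kappaFSD (show 0 < n by omega) α M < 1) :
    ∀ t : ℤ, 0 ≤ t →
      frobNorm (X t - Xstar) ≤
        kappaFSD (show 0 < n by omega) α M ^ t.toNat * frobNorm (X 0 - Xstar) := by
  have hn0 : 0 < n := by omega
  set κ := kappaFSD hn0 α M with hκdef
  -- the error recursion
  have hstep : ∀ t : ℤ, 0 ≤ t →
      X (t + 1) - Xstar =
        ((1 : Matrix (Fin K) (Fin K) ℝ) - α • ((M (idx n hn0 t))ᵀ * M (idx n hn0 t))) *
          (X t - Xstar) := by
    intro t ht
    set i0 := idx n hn0 t with hi0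
    have hMB : (M i0)ᵀ * B = ((M i0)ᵀ * M i0) * Xstar := by
      rw [hB, ← Matrix.mul_assoc, Matrix.mul_sum]
      rw [Finset.sum_eq_single i0 (fun j _ hj => by rw [horth i0 j (Ne.symm hj)])
        (fun h => absurd (Finset.mem_univ i0) h)]
    have hMS : (M i0)ᵀ * (∑ i : Fin n, M (idx n hn0 (t - ((i : ℕ) : ℤ))) * X (t - ((i : ℕ) : ℤ)))
        = ((M i0)ᵀ * M i0) * X t := by
      rw [Matrix.mul_sum]
      rw [Finset.sum_eq_single (⟨0, hn0⟩ : Fin n)]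
      · simp [hi0]
        rw [← Matrix.mul_assoc]
      · intro j _ hj
        rw [← Matrix.mul_assoc, horth i0 _ (Ne.symm (idx_ne hn0 t j hj)), Matrix.zero_mul]
      · exact fun h => absurd (Finset.mem_univ _) h
    have hMR : (M i0)ᵀ * R (t + 1) = ((M i0)ᵀ * M i0) * (Xstar - X t) := by
      rw [hR t ht, Matrix.mul_sub, hMB, hMS, Matrix.mul_sub]
    rw [hXstep t ht, hMR]
    rw [Matrix.sub_mul, Matrix.one_mul, Matrix.smul_mul, Matrix.mul_sub, Matrix.mul_sub]
    module
  -- norm bound for one step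
  have hκ0 : 0 ≤ κ := by
    rw [hκdef, kappaFSD]
    exact le_trans (specNorm_nonneg _) (Finset.le_sup' (fun i => specNorm ((1 : Matrix (Fin K) (Fin K) ℝ) - α • ((M i)ᵀ * M i))) (Finset.mem_univ (⟨0, hn0⟩ : Fin n)))
  have honestep : ∀ t : ℤ, 0 ≤ t →
      frobNorm (X (t + 1) - Xstar) ≤ κ * frobNorm (X t - Xstar) := by
    intro t ht
    rw [hstep t ht]
    calc frobNorm (_ * (X t - Xstar))
        ≤ specNorm ((1 : Matrix (Fin K) (Fin K) ℝ) -
            α • ((M (idx n hn0 t))ᵀ * M (idx n hn0 t))) * frobNorm (X t - Xstar) :=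
          frobNorm_mul_le _ _
      _ ≤ κ * frobNorm (X t - Xstar) := by
          apply mul_le_mul_of_nonneg_right _ (Real.sqrt_nonneg _)
          rw [hκdef, kappaFSD]
          exact Finset.le_sup' (fun i => specNorm ((1 : Matrix (Fin K) (Fin K) ℝ) - α • ((M i)ᵀ * M i))) (Finset.mem_univ (idx n hn0 t))
  -- induction
  have hnat : ∀ m : ℕ, frobNorm (X (m : ℤ) - Xstar) ≤ κ ^ m * frobNorm (X 0 - Xstar) := by
    intro m
    induction m with
    | zero => simp
    | succ m ih =>
      have h1 : ((m + 1 : ℕ) : ℤ) = (m : ℤ) + 1 := by push_cast; ring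
      rw [h1]
      calc frobNorm (X ((m : ℤ) + 1) - Xstar) ≤ κ * frobNorm (X (m : ℤ) - Xstar) :=
            honestep m (by positivity)
        _ ≤ κ * (κ ^ m * frobNorm (X 0 - Xstar)) := mul_le_mul_of_nonneg_left ih hκ0
        _ = κ ^ (m + 1) * frobNorm (X 0 - Xstar) := by ring
  intro t ht
  have : t = (t.toNat : ℤ) := (Int.toNat_of_nonneg ht).symm
  rw [this]
  exact hnat t.toNat
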